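/- If g : Z_p → Z_p is an arithmetic differential operator of order m and c ∈ Z_p, then the translate h(x) := g(x + c) is also an arithmetic differential operator of order m. -/

import Mathlib

open Filter

variable {p : ℕ} [Fact p.Prime]

/-- A multivariate power series over `ℤ_[p]` is restricted if its coefficients
tend to `0` `p`-adically as the total degree of the index tends to infinity
(equivalently, along the cofinite filter on indices). -/
def MvRestricted {k : ℕ} (F : MvPowerSeries (Fin k) ℤ_[p]) : Prop :=
  Tendsto (fun α : Fin k →₀ ℕ => MvPowerSeries.coeff α F) cofinite (nhds 0)

/-- Evaluation of a (restricted) multivariate power series at a tuple of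
`p`-adic integers. -/
noncomputable def mvEval {k : ℕ} (F : MvPowerSeries (Fin k) ℤ_[p])
    (x : Fin k → ℤ_[p]) : ℤ_[p] :=
  ∑' α : Fin k →₀ ℕ, MvPowerSeries.coeff α F * ∏ i : Fin k, x i ^ α i

/-- A one-variable power series over `ℤ_[p]` is restricted if its
coefficients tend to `0` `p`-adically. -/
def PRestricted (F : PowerSeries ℤ_[p]) : Prop :=
  Tendsto (fun n : ℕ => PowerSeries.coeff n F) atTop (nhds 0)

/-- Evaluation of a (restricted) one-variable power series at a `p`-adic
integer. -/
noncomputable def pEval (F : PowerSeries ℤ_[p]) (u : ℤ_[p]) : ℤ_[p] :=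
  ∑' n : ℕ, PowerSeries.coeff n F * u ^ n

/-- `f` is an arithmetic differential operator of order `m` (relative to the
Fermat quotient operator `δ`) if it is given by a restricted power series in
`a, δa, ..., δ^m a`. -/
def IsADO (δ : ℤ_[p] → ℤ_[p]) (m : ℕ) (f : ℤ_[p] → ℤ_[p]) : Prop :=
  ∃ F : MvPowerSeries (Fin (m + 1)) ℤ_[p], MvRestricted F ∧
    ∀ a : ℤ_[p], f a = mvEval F (fun i : Fin (m + 1) => δ^[(i : ℕ)] a)

/-- `f` is analytic of level `m` if on every disc `a + p^m ℤ_[p]` it is given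
by a restricted power series in `u`, where `x = a + p^m u`. -/
def IsAnalyticLevel (m : ℕ) (f : ℤ_[p] → ℤ_[p]) : Prop :=
  ∀ a : ℤ_[p], ∃ F : PowerSeries ℤ_[p], PRestricted F ∧
    ∀ u : ℤ_[p], f (a + (p : ℤ_[p]) ^ m * u) = pEval F u


section Helpers

open MvPolynomial

variable {ι : Type*}

lemma padic_tendsto_cofinite_iff (f : ι → ℤ_[p]) :
    Tendsto f cofinite (nhds 0) ↔ ∀ ε : ℝ, 0 < ε → {i | ε ≤ ‖f i‖}.Finite := by
  simp only [Metric.tendsto_nhds, eventually_cofinite, dist_zero_right, not_lt]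

lemma padic_summable {f : ι → ℤ_[p]} (h : Tendsto f cofinite (nhds 0)) : Summable f :=
  NonarchimedeanAddGroup.summable_of_tendsto_cofinite_zero h

lemma padic_norm_tsum_le (f : ι → ℤ_[p]) {C : ℝ} (hC : 0 ≤ C) (h : ∀ i, ‖f i‖ ≤ C) :
    ‖∑' i, f i‖ ≤ C := by
  by_cases hs : Summable f
  · refine le_of_tendsto ((continuous_norm.tendsto _).comp hs.hasSum) ?_
    exact Eventually.of_forall fun s =>
      IsUltrametricDist.norm_sum_le_of_forall_le_of_nonneg hC fun i _ => h i
  · rw [tsum_eq_zero_of_not_summable hs]; simpa using hC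

lemma finsupp_sum_le_finite (k M : ℕ) : {β : Fin k →₀ ℕ | ∑ i, β i ≤ M}.Finite := by
  have h1 : {g : Fin k → ℕ | ∀ i, g i ≤ M}.Finite := by
    have : {g : Fin k → ℕ | ∀ i, g i ≤ M} = Set.pi Set.univ fun _ => Set.Iic M := by
      ext g; simp [Set.mem_pi, Pi.le_def]
    rw [this]
    exact Set.Finite.pi fun _ => Set.finite_Iic M
  have h2 : {β : Fin k →₀ ℕ | ∀ i, β i ≤ M}.Finite := by
    have := h1.preimage (f := fun β : Fin k →₀ ℕ => (β : Fin k → ℕ))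
      (Set.injOn_of_injective (DFunLike.coe_injective))
    exact this
  refine h2.subset fun β hβ i => ?_
  exact le_trans (Finset.single_le_sum (fun j _ => Nat.zero_le (β j)) (Finset.mem_univ i)) hβ

lemma mv_comp {k : ℕ} (F : MvPowerSeries (Fin k) ℤ_[p]) (hF : MvRestricted F)
    (P : Fin k → MvPolynomial (Fin k) ℤ_[p]) :
    ∃ G : MvPowerSeries (Fin k) ℤ_[p], MvRestricted G ∧
      ∀ x : Fin k → ℤ_[p], mvEval G x = mvEval F fun i => MvPolynomial.eval x (P i) := by
  classical
  set Q : (Fin k →₀ ℕ) → MvPolynomial (Fin k) ℤ_[p] := fun α => ∏ i, P i ^ α i with hQ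
  set D : ℕ := Finset.univ.sup fun i => (P i).totalDegree with hD
  -- degree bound
  have hdeg : ∀ α : Fin k →₀ ℕ, (Q α).totalDegree ≤ D * ∑ i, α i := by
    intro α
    refine le_trans (totalDegree_finset_prod _ _) ?_
    rw [Finset.mul_sum]
    refine Finset.sum_le_sum fun i _ => ?_
    refine le_trans (totalDegree_pow _ _) ?_
    rw [mul_comm D (α i)]
    exact Nat.mul_le_mul_left _ (Finset.le_sup (f := fun i => (P i).totalDegree) (Finset.mem_univ i))
  have hcoeff0 : ∀ α β : Fin k →₀ ℕ, D * (∑ i, α i) < ∑ i, β i →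
      MvPolynomial.coeff β (Q α) = 0 := by
    intro α β h
    apply coeff_eq_zero_of_totalDegree_lt
    have hsup : ∑ i ∈ β.support, β i = ∑ i, β i :=
      Finset.sum_subset (Finset.subset_univ _) fun i _ hi => Finsupp.notMem_support_iff.mp hi
    rw [hsup]
    exact lt_of_le_of_lt (hdeg α) h
  -- norms
  have hnorm : ∀ (α β : Fin k →₀ ℕ),
      ‖MvPowerSeries.coeff α F * MvPolynomial.coeff β (Q α)‖ ≤
        ‖MvPowerSeries.coeff α F‖ := by
    intro α β
    calc ‖MvPowerSeries.coeff α F * MvPolynomial.coeff β (Q α)‖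
        ≤ ‖MvPowerSeries.coeff α F‖ * ‖MvPolynomial.coeff β (Q α)‖ := norm_mul_le _ _
      _ ≤ ‖MvPowerSeries.coeff α F‖ * 1 :=
          mul_le_mul_of_nonneg_left (PadicInt.norm_le_one _) (norm_nonneg _)
      _ = _ := mul_one _
  have hsum : ∀ β : Fin k →₀ ℕ,
      Summable fun α => MvPowerSeries.coeff α F * MvPolynomial.coeff β (Q α) := by
    intro β
    apply padic_summable
    apply squeeze_zero_norm (fun α => hnorm α β)
    simpa [Function.comp_def] using (continuous_norm.tendsto (0 : ℤ_[p])).comp hF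
  set G : MvPowerSeries (Fin k) ℤ_[p] :=
    fun β => ∑' α, MvPowerSeries.coeff α F * MvPolynomial.coeff β (Q α) with hG
  have hGcoeff : ∀ β, MvPowerSeries.coeff β G =
      ∑' α, MvPowerSeries.coeff α F * MvPolynomial.coeff β (Q α) := fun β => rfl
  refine ⟨G, ?_, ?_⟩
  · -- restricted
    rw [MvRestricted, padic_tendsto_cofinite_iff]
    intro ε hε
    obtain hfin := (padic_tendsto_cofinite_iff _).mp hF (ε / 2) (by linarith)
    set N : ℕ := hfin.toFinset.sup fun α => ∑ i, α i with hN
    refine (finsupp_sum_le_finite k (D * N)).subset ?_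
    intro β hβ
    simp only [Set.mem_setOf_eq] at hβ ⊢
    by_contra hlt
    push_neg at hlt
    have hterm : ∀ α : Fin k →₀ ℕ,
        ‖MvPowerSeries.coeff α F * MvPolynomial.coeff β (Q α)‖ ≤ ε / 2 := by
      intro α
      by_cases hc : MvPolynomial.coeff β (Q α) = 0
      · simp [hc]; linarith
      · have h1 : ¬ (D * (∑ i, α i) < ∑ i, β i) := fun h => hc (hcoeff0 α β h)
        push_neg at h1
        have h2 : N < ∑ i, α i := by
          by_contra h2
          push_neg at h2
          have h3 : (∑ i, β i) ≤ D * N := le_trans h1 (Nat.mul_le_mul_left D h2)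
          omega
        have hα : α ∉ hfin.toFinset := by
          intro hmem
          exact absurd (Finset.le_sup (f := fun α => ∑ i, α i) hmem) (not_le.mpr h2)
        rw [Set.Finite.mem_toFinset] at hα
        simp only [Set.mem_setOf_eq, not_le] at hα
        exact le_trans (hnorm α β) (le_of_lt hα)
    have := padic_norm_tsum_le _ (by linarith : (0:ℝ) ≤ ε / 2) hterm
    rw [← hGcoeff] at this
    linarith
  · -- evaluation
    intro x
    set t : (Fin k →₀ ℕ) × (Fin k →₀ ℕ) → ℤ_[p] := fun q =>
      MvPowerSeries.coeff q.1 F * MvPolynomial.coeff q.2 (Q q.1) * ∏ i, x i ^ q.2 i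
      with ht
    have htnorm : ∀ q, ‖t q‖ ≤ ‖MvPowerSeries.coeff q.1 F‖ := by
      intro q
      calc ‖t q‖ ≤ ‖MvPowerSeries.coeff q.1 F * MvPolynomial.coeff q.2 (Q q.1)‖ *
            ‖∏ i, x i ^ q.2 i‖ := norm_mul_le _ _
        _ ≤ ‖MvPowerSeries.coeff q.1 F * MvPolynomial.coeff q.2 (Q q.1)‖ * 1 :=
            mul_le_mul_of_nonneg_left (PadicInt.norm_le_one _) (norm_nonneg _)
        _ = _ := mul_one _
        _ ≤ _ := hnorm q.1 q.2
    have htS : Summable t := by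
      apply padic_summable
      rw [padic_tendsto_cofinite_iff]
      intro ε hε
      obtain hfin := (padic_tendsto_cofinite_iff _).mp hF ε hε
      have hsubset : {q : (Fin k →₀ ℕ) × (Fin k →₀ ℕ) | ε ≤ ‖t q‖} ⊆
          ⋃ α ∈ hfin.toFinset, ({α} : Set (Fin k →₀ ℕ)) ×ˢ ((Q α).support : Set (Fin k →₀ ℕ)) := by
        intro q hq
        simp only [Set.mem_setOf_eq] at hq
        have h1 : ε ≤ ‖MvPowerSeries.coeff q.1 F‖ := le_trans hq (htnorm q)
        have h2 : MvPolynomial.coeff q.2 (Q q.1) ≠ 0 := by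
          intro hc
          rw [ht] at hq
          simp only [hc, mul_zero, zero_mul, norm_zero] at hq
          linarith
        have hq1 : q.1 ∈ hfin.toFinset := by
          rw [Set.Finite.mem_toFinset]; exact h1
        refine Set.mem_biUnion hq1 (Set.mem_prod.mpr ⟨rfl, ?_⟩)
        exact Finset.mem_coe.mpr (MvPolynomial.mem_support_iff.mpr h2)
      refine Set.Finite.subset ?_ hsubset
      exact Set.Finite.biUnion hfin.toFinset.finite_toSet fun α _ =>
        (Set.finite_singleton α).prod (Q α).support.finite_toSet
    -- now compute
    have hQeval : ∀ α : Fin k →₀ ℕ,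
        (∏ i, (MvPolynomial.eval x (P i)) ^ α i) = MvPolynomial.eval x (Q α) := by
      intro α
      rw [hQ]
      simp only [map_prod, map_pow]
    have hpoly : ∀ α : Fin k →₀ ℕ, MvPolynomial.eval x (Q α) =
        ∑' β, MvPolynomial.coeff β (Q α) * ∏ i, x i ^ β i := by
      intro α
      rw [tsum_eq_sum (s := (Q α).support)
        (fun β hβ => by rw [MvPolynomial.notMem_support_iff.mp hβ, zero_mul]),
        eval_eq']
    have hrow : ∀ α : Fin k →₀ ℕ, Summable fun β =>
        MvPolynomial.coeff β (Q α) * ∏ i, x i ^ β i := by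
      intro α
      exact summable_of_ne_finset_zero (s := (Q α).support)
        (fun β hβ => by rw [MvPolynomial.notMem_support_iff.mp hβ, zero_mul])
    calc mvEval G x = ∑' β, (∑' α, MvPowerSeries.coeff α F *
            MvPolynomial.coeff β (Q α)) * ∏ i, x i ^ β i := by
          rw [mvEval]
          exact tsum_congr fun β => by rw [hGcoeff β]
      _ = ∑' β, ∑' α, t (α, β) := by
          refine tsum_congr fun β => ?_
          rw [← (hsum β).tsum_mul_right]
      _ = ∑' α, ∑' β, t (α, β) := Summable.tsum_comm (f := fun α β => t (α, β)) htS
      _ = ∑' α, MvPowerSeries.coeff α F * ∏ i, (MvPolynomial.eval x (P i)) ^ α i := by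
          refine tsum_congr fun α => ?_
          rw [hQeval, hpoly, ← Summable.tsum_mul_left _ (hrow α)]
          refine tsum_congr fun β => ?_
          rw [ht]; ring
      _ = mvEval F fun i => MvPolynomial.eval x (P i) := rfl


lemma padic_p_ne_zero : (p : ℤ_[p]) ≠ 0 :=
  Nat.cast_ne_zero.mpr (Fact.out : p.Prime).ne_zero

lemma padic_binomial (s t : ℤ_[p]) :
    (s + t) ^ p = s ^ p + t ^ p +
      (p : ℤ_[p]) * ∑ k ∈ Finset.Ioo 0 p, ((p.choose k / p : ℕ) : ℤ_[p]) * s ^ k * t ^ (p - k) := by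
  have hp : p.Prime := Fact.out
  rw [add_pow]
  have hsplit : Finset.range (p + 1) \ Finset.Ioo 0 p = {0, p} := by
    ext k
    simp only [Finset.mem_sdiff, Finset.mem_range, Finset.mem_Ioo, Finset.mem_insert,
      Finset.mem_singleton]
    omega
  have hsub : Finset.Ioo 0 p ⊆ Finset.range (p + 1) := by
    intro k hk; simp only [Finset.mem_Ioo] at hk; simp only [Finset.mem_range]; omega
  rw [← Finset.sum_sdiff hsub, hsplit, Finset.sum_pair hp.ne_zero.symm]
  simp only [pow_zero, Nat.sub_zero, Nat.choose_zero_right, Nat.choose_self, Nat.sub_self,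
    Nat.cast_one, one_mul, mul_one]
  rw [Finset.mul_sum]
  have : ∀ k ∈ Finset.Ioo 0 p,
      s ^ k * t ^ (p - k) * (p.choose k : ℤ_[p]) =
        (p : ℤ_[p]) * (((p.choose k / p : ℕ) : ℤ_[p]) * s ^ k * t ^ (p - k)) := by
    intro k hk
    simp only [Finset.mem_Ioo] at hk
    have hdvd : p ∣ p.choose k := hp.dvd_choose_self (by omega) hk.2
    have : ((p.choose k : ℕ) : ℤ_[p]) = (p : ℤ_[p]) * ((p.choose k / p : ℕ) : ℤ_[p]) := by
      rw [← Nat.cast_mul, Nat.mul_div_cancel' hdvd]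
    rw [this]; ring
  rw [Finset.sum_congr rfl this]
  ring

lemma delta_add (δ : ℤ_[p] → ℤ_[p]) (hδ : ∀ x : ℤ_[p], (p : ℤ_[p]) * δ x = x - x ^ p)
    (s t : ℤ_[p]) :
    δ (s + t) = δ s + δ t -
      ∑ k ∈ Finset.Ioo 0 p, ((p.choose k / p : ℕ) : ℤ_[p]) * s ^ k * t ^ (p - k) := by
  apply mul_left_cancel₀ (padic_p_ne_zero (p := p))
  rw [hδ, mul_sub, mul_add, hδ, hδ, padic_binomial s t]
  ring

lemma delta_mul (δ : ℤ_[p] → ℤ_[p]) (hδ : ∀ x : ℤ_[p], (p : ℤ_[p]) * δ x = x - x ^ p)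
    (s t : ℤ_[p]) : δ (s * t) = s * δ t + t ^ p * δ s := by
  apply mul_left_cancel₀ (padic_p_ne_zero (p := p))
  rw [hδ]
  have h1 := hδ s
  have h2 := hδ t
  linear_combination (-s) * h2 + (-(t ^ p)) * h1

lemma delta_poly_step (δ : ℤ_[p] → ℤ_[p]) (hδ : ∀ x : ℤ_[p], (p : ℤ_[p]) * δ x = x - x ^ p)
    (n : ℕ) (Q : MvPolynomial (Fin (n + 1)) ℤ_[p]) :
    ∃ R : MvPolynomial (Fin (n + 2)) ℤ_[p], ∀ a : ℤ_[p],
      eval (fun j : Fin (n + 2) => δ^[(j : ℕ)] a) R =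
        δ (eval (fun j : Fin (n + 1) => δ^[(j : ℕ)] a) Q) := by
  have hren : ∀ (q : MvPolynomial (Fin (n + 1)) ℤ_[p]) (a : ℤ_[p]),
      eval (fun j : Fin (n + 2) => δ^[(j : ℕ)] a) (rename Fin.castSucc q) =
        eval (fun j : Fin (n + 1) => δ^[(j : ℕ)] a) q := by
    intro q a
    rw [eval_rename]
    congr 1
  induction Q using MvPolynomial.induction_on with
  | C r => exact ⟨C (δ r), fun a => by simp⟩
  | add q₁ q₂ ih₁ ih₂ =>
    obtain ⟨R₁, h₁⟩ := ih₁
    obtain ⟨R₂, h₂⟩ := ih₂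
    refine ⟨R₁ + R₂ - ∑ k ∈ Finset.Ioo 0 p, C ((p.choose k / p : ℕ) : ℤ_[p]) *
      (rename Fin.castSucc q₁) ^ k * (rename Fin.castSucc q₂) ^ (p - k), fun a => ?_⟩
    rw [map_sub, map_add, h₁, h₂, map_sum, map_add,
      delta_add δ hδ]
    congr 1
    refine Finset.sum_congr rfl fun k _ => ?_
    rw [eval_mul, eval_mul, eval_pow, eval_pow, eval_C, hren, hren]
  | mul_X q i ih =>
    obtain ⟨R, hR⟩ := ih
    refine ⟨rename Fin.castSucc q * X i.succ + (X (Fin.castSucc i)) ^ p * R, fun a => ?_⟩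
    rw [map_add, eval_mul, eval_mul, eval_pow, eval_X, eval_X, hren, hR, eval_mul, eval_X,
      delta_mul δ hδ]
    simp [Function.iterate_succ_apply']

lemma delta_polys (δ : ℤ_[p] → ℤ_[p]) (hδ : ∀ x : ℤ_[p], (p : ℤ_[p]) * δ x = x - x ^ p)
    (c : ℤ_[p]) : ∀ i : ℕ, ∃ Q : MvPolynomial (Fin (i + 1)) ℤ_[p], ∀ a : ℤ_[p],
      eval (fun j : Fin (i + 1) => δ^[(j : ℕ)] a) Q = δ^[i] (a + c) := by
  intro i
  induction i with
  | zero => exact ⟨X 0 + C c, fun a => by simp⟩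
  | succ i ih =>
    obtain ⟨Q, hQ⟩ := ih
    obtain ⟨R, hR⟩ := delta_poly_step δ hδ i Q
    exact ⟨R, fun a => by rw [hR, hQ, Function.iterate_succ_apply']⟩

end Helpers

/-- The translate of an arithmetic differential operator of order `m` is again
an arithmetic differential operator of order `m`. -/
theorem ado_translate (p : ℕ) [Fact p.Prime]
    (δ : ℤ_[p] → ℤ_[p]) (hδ : ∀ x : ℤ_[p], (p : ℤ_[p]) * δ x = x - x ^ p)
    (m : ℕ) (g : ℤ_[p] → ℤ_[p]) (hg : IsADO δ m g) (c : ℤ_[p]) :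
    IsADO δ m (fun x : ℤ_[p] => g (x + c)) := by
  classical
  obtain ⟨F, hF, hFg⟩ := hg
  choose Qs hQs using delta_polys δ hδ c
  set P : Fin (m + 1) → MvPolynomial (Fin (m + 1)) ℤ_[p] := fun i =>
    MvPolynomial.rename (Fin.castLE (Nat.succ_le_of_lt i.isLt)) (Qs (i : ℕ)) with hPdef
  have hP : ∀ (i : Fin (m + 1)) (x : ℤ_[p]),
      MvPolynomial.eval (fun j : Fin (m + 1) => δ^[(j : ℕ)] x) (P i) = δ^[(i : ℕ)] (x + c) := by
    intro i x
    rw [hPdef]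
    simp only
    rw [MvPolynomial.eval_rename]
    have hcomp : ((fun j : Fin (m + 1) => δ^[(j : ℕ)] x) ∘
        Fin.castLE (Nat.succ_le_of_lt i.isLt)) = fun j : Fin ((i : ℕ) + 1) => δ^[(j : ℕ)] x := by
      funext j
      simp [Function.comp]
    rw [hcomp, hQs]
  obtain ⟨G, hG, hGe⟩ := mv_comp F hF P
  refine ⟨G, hG, fun x => ?_⟩
  show g (x + c) = mvEval G fun i : Fin (m + 1) => δ^[(i : ℕ)] x
  rw [hGe, hFg (x + c)]
  congr 1
  funext i
  rw [hP]
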